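/- Let (X_1,Y_1,Z_1),…,(X_n,Y_n,Z_n) be i.i.d. finite random vectors and M a finite random variable such that M → X^n → (Y^n, Z^n) is a Markov chain. Then I(Z^n; M) − I(Y^n; M) = ∑_{i=1}^n [ I(Z_i; U_i) − I(Y_i; U_i) ], where U_i := (Y_{i+1}^n, Z^{i-1}, M). -/

import Mathlib

open scoped BigOperators Classical

variable {Ω : Type} [Fintype Ω]

/-- Probability that the random variable `X` takes the value `x` under the pmf `p`. -/
noncomputable def prEq {α : Type} (p : Ω → ℝ) (X : Ω → α) (x : α) : ℝ :=
  ∑ ω, if X ω = x then p ω else 0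

/-- Shannon entropy of a finite random variable. -/
noncomputable def ent {α : Type} [Fintype α] (p : Ω → ℝ) (X : Ω → α) : ℝ :=
  ∑ x, Real.negMulLog (prEq p X x)

/-- Conditional Shannon entropy `H(X | Y)`. -/
noncomputable def condEnt {α β : Type} [Fintype α] [Fintype β]
    (p : Ω → ℝ) (X : Ω → α) (Y : Ω → β) : ℝ :=
  ent p (fun ω => (X ω, Y ω)) - ent p Y

/-- Mutual information `I(X ; Y)`. -/
noncomputable def mutInf {α β : Type} [Fintype α] [Fintype β]
    (p : Ω → ℝ) (X : Ω → α) (Y : Ω → β) : ℝ :=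
  ent p X + ent p Y - ent p (fun ω => (X ω, Y ω))

/-- Conditional mutual information `I(X ; Y | Z)`. -/
noncomputable def condMutInf {α β γ : Type} [Fintype α] [Fintype β] [Fintype γ]
    (p : Ω → ℝ) (X : Ω → α) (Y : Ω → β) (Z : Ω → γ) : ℝ :=
  condEnt p X Z - condEnt p X (fun ω => (Y ω, Z ω))

/-- `X` and `Y` are conditionally independent given `Z`. -/
def CondIndep {α β γ : Type} (p : Ω → ℝ) (X : Ω → α) (Y : Ω → β) (Z : Ω → γ) : Prop :=
  ∀ x y z,
    prEq p (fun ω => (X ω, Y ω, Z ω)) (x, y, z) * prEq p Z z =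
      prEq p (fun ω => (X ω, Z ω)) (x, z) * prEq p (fun ω => (Y ω, Z ω)) (y, z)

/-- `X` and `Y` are independent. -/
def Indep {α β : Type} (p : Ω → ℝ) (X : Ω → α) (Y : Ω → β) : Prop :=
  ∀ x y, prEq p (fun ω => (X ω, Y ω)) (x, y) = prEq p X x * prEq p Y y

/-- `p` is a probability mass function on `Ω`. -/
def IsPMF (p : Ω → ℝ) : Prop := (∀ ω, 0 ≤ p ω) ∧ ∑ ω, p ω = 1

/-- The random variables `W 0, …, W (n-1)` are i.i.d. with common marginal `q`. -/
def IID {α : Type} {n : ℕ} (p : Ω → ℝ) (W : Fin n → Ω → α) : Prop :=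
  ∃ q : α → ℝ,
    (∀ w : Fin n → α, prEq p (fun ω => (fun i => W i ω)) w = ∏ i, q (w i)) ∧
    (∀ i x, prEq p (W i) x = q x)

/-- The tuple `(Y_{i+1}, …, Y_n)`, encoded as an `Option`-masked vector. -/
def fut {n : ℕ} {α : Type} (Y : Fin n → Ω → α) (i : Fin n) : Ω → (Fin n → Option α) :=
  fun ω j => if i < j then some (Y j ω) else none

/-- The tuple `(Z_1, …, Z_{i-1})`, encoded as an `Option`-masked vector. -/
def past {n : ℕ} {α : Type} (Z : Fin n → Ω → α) (i : Fin n) : Ω → (Fin n → Option α) :=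
  fun ω j => if j < i then some (Z j ω) else none

lemma prEq_eq_zero' {α : Type} (p : Ω → ℝ) (X : Ω → α) {b : α} (hb : ∀ ω, X ω ≠ b) :
    prEq p X b = 0 :=
  Finset.sum_eq_zero fun ω _ => if_neg (hb ω)

lemma sum_prEq {α : Type} [Fintype α] (p : Ω → ℝ) (X : Ω → α) :
    ∑ x, prEq p X x = ∑ ω, p ω := by
  unfold prEq
  rw [Finset.sum_comm]
  refine Finset.sum_congr rfl fun ω _ => ?_
  simp

lemma prEq_comp {α β : Type} [Fintype α] (p : Ω → ℝ) (T : Ω → α) (g : α → β) (b : β) :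
    prEq p (fun ω => g (T ω)) b = ∑ a, if g a = b then prEq p T a else 0 := by
  unfold prEq
  symm
  calc ∑ a, (if g a = b then ∑ ω, if T ω = a then p ω else 0 else 0)
      = ∑ a, ∑ ω, (if T ω = a then (if g a = b then p ω else 0) else 0) := by
        refine Finset.sum_congr rfl fun a _ => ?_
        by_cases h : g a = b <;> simp [h]
    _ = ∑ ω, ∑ a, (if T ω = a then (if g a = b then p ω else 0) else 0) := Finset.sum_comm
    _ = ∑ ω, if g (T ω) = b then p ω else 0 := by
        refine Finset.sum_congr rfl fun ω _ => ?_
        rw [Finset.sum_ite_eq Finset.univ (T ω) (fun a => if g a = b then p ω else 0)]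
        simp

lemma ent_congr {α β : Type} [Fintype α] [Fintype β] (p : Ω → ℝ) (X : Ω → α) (X' : Ω → β)
    (g : α → β) (h : β → α) (hg : ∀ ω, X' ω = g (X ω)) (hh : ∀ ω, X ω = h (X' ω)) :
    ent p X' = ent p X := by
  classical
  have hginj : ∀ ω₁ ω₂, g (X ω₁) = g (X ω₂) → X ω₁ = X ω₂ := by
    intro ω₁ ω₂ hEq
    calc X ω₁ = h (X' ω₁) := hh ω₁
      _ = h (g (X ω₁)) := by rw [hg ω₁]
      _ = h (g (X ω₂)) := by rw [hEq]
      _ = h (X' ω₂) := by rw [hg ω₂]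
      _ = X ω₂ := (hh ω₂).symm
  have hpr : ∀ ω, prEq p X' (g (X ω)) = prEq p X (X ω) := by
    intro ω
    unfold prEq
    refine Finset.sum_congr rfl fun ω' _ => ?_
    have hiff : (X' ω' = g (X ω)) ↔ (X ω' = X ω) := by
      rw [hg ω']
      exact ⟨hginj ω' ω, fun e => by rw [e]⟩
    by_cases hc : X ω' = X ω
    · rw [if_pos (hiff.mpr hc), if_pos hc]
    · rw [if_neg (fun hcc => hc (hiff.mp hcc)), if_neg hc]
  have himg : Finset.image X' Finset.univ = Finset.image g (Finset.image X Finset.univ) := by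
    rw [Finset.image_image]
    exact Finset.image_congr fun ω _ => hg ω
  have h1 : ent p X' = ∑ b ∈ Finset.image X' Finset.univ, Real.negMulLog (prEq p X' b) := by
    unfold ent
    refine (Finset.sum_subset (Finset.subset_univ _) fun b _ hb => ?_).symm
    have : prEq p X' b = 0 := prEq_eq_zero' p X' fun ω hω =>
      hb (Finset.mem_image.mpr ⟨ω, Finset.mem_univ ω, hω⟩)
    rw [this, Real.negMulLog_zero]
  have h2 : ent p X = ∑ a ∈ Finset.image X Finset.univ, Real.negMulLog (prEq p X a) := by
    unfold ent
    refine (Finset.sum_subset (Finset.subset_univ _) fun a _ ha => ?_).symm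
    have : prEq p X a = 0 := prEq_eq_zero' p X fun ω hω =>
      ha (Finset.mem_image.mpr ⟨ω, Finset.mem_univ ω, hω⟩)
    rw [this, Real.negMulLog_zero]
  rw [h1, h2, himg, Finset.sum_image (f := fun b => Real.negMulLog (prEq p X' b))]
  · refine Finset.sum_congr rfl fun a ha => ?_
    obtain ⟨ω, -, rfl⟩ := Finset.mem_image.mp ha
    rw [hpr ω]
  · intro a₁ ha₁ a₂ ha₂ hEq
    obtain ⟨ω₁, -, rfl⟩ := Finset.mem_image.mp ha₁
    obtain ⟨ω₂, -, rfl⟩ := Finset.mem_image.mp ha₂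
    exact hginj ω₁ ω₂ hEq

lemma sum_prod_pi {α : Type} [Fintype α] :
    ∀ (n : ℕ) (q : Fin n → α → ℝ),
      ∑ w : Fin n → α, ∏ i, q i (w i) = ∏ i, ∑ x, q i x := by
  intro n
  induction n with
  | zero => intro q; simp
  | succ m ih =>
    intro q
    rw [Fintype.sum_equiv ((Fin.consEquiv (fun _ : Fin (m + 1) => α)).symm)
      (fun w => ∏ i, q i (w i))
      (fun u => q 0 u.1 * ∏ i : Fin m, q i.succ (u.2 i))
      (fun w => Fin.prod_univ_succ (fun i => q i (w i)))]
    rw [Fintype.sum_prod_type, Fin.prod_univ_succ, ← ih (fun i => q i.succ), Finset.sum_mul]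
    refine Finset.sum_congr rfl fun x _ => ?_
    rw [Finset.mul_sum]

lemma sum_negMulLog_pi {α : Type} [Fintype α] :
    ∀ (n : ℕ) (q : Fin n → α → ℝ), (∀ i, ∑ x, q i x = 1) →
      ∑ w : Fin n → α, Real.negMulLog (∏ i, q i (w i)) =
        ∑ i, ∑ x, Real.negMulLog (q i x) := by
  intro n
  induction n with
  | zero => intro q _; simp
  | succ m ih =>
    intro q hq
    rw [Fintype.sum_equiv ((Fin.consEquiv (fun _ : Fin (m + 1) => α)).symm)
      (fun w => Real.negMulLog (∏ i, q i (w i)))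
      (fun u => Real.negMulLog (q 0 u.1 * ∏ i : Fin m, q i.succ (u.2 i)))
      (fun w => congrArg Real.negMulLog (Fin.prod_univ_succ (fun i => q i (w i))))]
    rw [Fintype.sum_prod_type]
    have key : ∀ x : α, ∑ v : Fin m → α,
        Real.negMulLog (q 0 x * ∏ i : Fin m, q i.succ (v i)) =
        (∑ v : Fin m → α, ∏ i, q i.succ (v i)) * Real.negMulLog (q 0 x)
          + q 0 x * ∑ v : Fin m → α, Real.negMulLog (∏ i, q i.succ (v i)) := by
      intro x
      rw [Finset.sum_mul, Finset.mul_sum]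
      rw [← Finset.sum_add_distrib]
      refine Finset.sum_congr rfl fun v _ => ?_
      rw [Real.negMulLog_mul]
    simp only [key]
    rw [sum_prod_pi m (fun i => q i.succ)]
    have h1 : ∏ i : Fin m, ∑ x, q i.succ x = 1 := by
      refine Finset.prod_eq_one fun i _ => hq i.succ
    rw [h1, ih (fun i => q i.succ) (fun i => hq i.succ)]
    rw [Finset.sum_add_distrib, Fin.sum_univ_succ]
    simp only [Finset.sum_mul, one_mul]
    rw [← Finset.sum_mul, hq 0, one_mul]

set_option maxHeartbeats 800000 in
lemma iid_proj_ent {𝓣 β : Type} [Fintype 𝓣] [Fintype β] {n : ℕ}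
    (p : Ω → ℝ) (hp1 : ∑ ω, p ω = 1) (W : Fin n → Ω → 𝓣) (hiid : IID p W) (π : 𝓣 → β) :
    ent p (fun ω => fun i => π (W i ω)) = ∑ i, ent p (fun ω => π (W i ω)) := by
  classical
  obtain ⟨q, hjoint, hmarg⟩ := hiid
  set qπ : β → ℝ := fun b => ∑ t, if π t = b then q t else 0 with hqπ
  have hmargπ : ∀ (i : Fin n) b, prEq p (fun ω => π (W i ω)) b = qπ b := by
    intro i b
    rw [prEq_comp p (W i) π b]
    exact Finset.sum_congr rfl fun t _ => by rw [hmarg i t]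
  have hsum1 : ∀ _i : Fin n, ∑ b, qπ b = 1 := by
    intro i
    calc ∑ b, qπ b = ∑ b, prEq p (fun ω => π (W i ω)) b :=
          Finset.sum_congr rfl fun b _ => (hmargπ i b).symm
      _ = ∑ ω, p ω := sum_prEq p _
      _ = 1 := hp1
  have hjointπ : ∀ v : Fin n → β,
      prEq p (fun ω => fun i => π (W i ω)) v = ∏ i, qπ (v i) := by
    intro v
    rw [show (fun ω => fun i => π (W i ω))
        = fun ω => (fun (w : Fin n → 𝓣) => fun i => π (w i)) (fun i => W i ω) from rfl,
      prEq_comp p (fun ω i => W i ω) (fun w i => π (w i)) v]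
    trans (∑ w : Fin n → 𝓣, ∏ i, (if π (w i) = v i then q (w i) else 0))
    · refine Finset.sum_congr rfl fun w _ => ?_
      rw [hjoint w]
      by_cases h : (fun i => π (w i)) = v
      · rw [if_pos h]
        refine (Finset.prod_congr rfl fun i _ => ?_).symm
        rw [if_pos (congrFun h i)]
      · rw [if_neg h]
        obtain ⟨i, hi⟩ : ∃ i, ¬ (π (w i) = v i) := by
          by_contra hc; push_neg at hc; exact h (funext hc)
        refine (Finset.prod_eq_zero (Finset.mem_univ i) ?_).symm
        rw [if_neg hi]
    trans (∏ i, ∑ t, (if π t = v i then q t else 0))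
    · exact sum_prod_pi n (fun i t => if π t = v i then q t else 0)
    · rfl
  unfold ent
  calc ∑ v, Real.negMulLog (prEq p (fun ω => fun i => π (W i ω)) v)
      = ∑ v : Fin n → β, Real.negMulLog (∏ i, qπ (v i)) :=
        Finset.sum_congr rfl fun v _ => by rw [hjointπ v]
    _ = ∑ _i : Fin n, ∑ x, Real.negMulLog (qπ x) := sum_negMulLog_pi n (fun _ => qπ) hsum1
    _ = ∑ i : Fin n, ∑ x, Real.negMulLog (prEq p (fun ω => π (W i ω)) x) :=
        Finset.sum_congr rfl fun i _ =>
          Finset.sum_congr rfl fun x _ => by rw [hmargπ i x]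

theorem stmt7 {n : ℕ} {𝓧 𝓨 𝓩 𝓜 : Type} [Fintype 𝓧] [Fintype 𝓨] [Fintype 𝓩] [Fintype 𝓜]
    (p : Ω → ℝ) (hp : IsPMF p)
    (X : Fin n → Ω → 𝓧) (Y : Fin n → Ω → 𝓨) (Z : Fin n → Ω → 𝓩) (M : Ω → 𝓜)
    (hiid : IID p (fun i ω => (X i ω, Y i ω, Z i ω)))
    (hmc : CondIndep p M (fun ω => (fun i => Y i ω, fun i => Z i ω))
      (fun ω => fun i => X i ω)) :
    mutInf p (fun ω => fun i => Z i ω) M - mutInf p (fun ω => fun i => Y i ω) M =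
      ∑ i, (mutInf p (Z i) (fun ω => (fut Y i ω, past Z i ω, M ω)) -
            mutInf p (Y i) (fun ω => (fut Y i ω, past Z i ω, M ω))) := by
  classical
  obtain ⟨hp0, hp1⟩ := hp
  have hΩ : Nonempty Ω := by
    by_contra hc
    rw [not_nonempty_iff] at hc
    rw [Finset.univ_eq_empty, Finset.sum_empty] at hp1
    exact one_ne_zero hp1.symm
  obtain ⟨ω₀⟩ := hΩ
  obtain ⟨G, hGdef⟩ : ∃ G : ℕ → ℝ, ∀ k, G k = ent p (fun ω =>
      ((fun j : Fin n => if k ≤ j.val then some (Y j ω) else none,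
        (fun j : Fin n => if j.val < k then some (Z j ω) else none, M ω)) :
        (Fin n → Option 𝓨) × (Fin n → Option 𝓩) × 𝓜)) := ⟨_, fun _ => rfl⟩
  have hG0 : G 0 = ent p (fun ω => ((fun i => Y i ω), M ω)) := by
    rw [hGdef 0]
    refine ent_congr p (fun ω => ((fun i => Y i ω), M ω)) _
      (fun u => (fun j => some (u.1 j), fun _ => none, u.2))
      (fun v => (fun j => (v.1 j).getD (Y j ω₀), v.2.2))
      (fun ω => ?_) (fun ω => ?_)
    · refine Prod.ext (funext fun j => ?_) (Prod.ext (funext fun j => ?_) rfl)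
      · simp
      · simp
    · refine Prod.ext (funext fun j => ?_) rfl
      simp
  have hGn : G n = ent p (fun ω => ((fun i => Z i ω), M ω)) := by
    rw [hGdef n]
    refine ent_congr p (fun ω => ((fun i => Z i ω), M ω)) _
      (fun u => (fun _ => none, fun j => some (u.1 j), u.2))
      (fun v => (fun j => (v.2.1 j).getD (Z j ω₀), v.2.2))
      (fun ω => ?_) (fun ω => ?_)
    · refine Prod.ext (funext fun j => ?_) (Prod.ext (funext fun j => ?_) rfl)
      · simp [Nat.not_le.mpr j.isLt]
      · simp [j.isLt]
    · refine Prod.ext (funext fun j => ?_) rfl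
      simp [j.isLt]
  have hfut : ∀ (i : Fin n) (ω : Ω) (j : Fin n),
      fut Y i ω j = if i.val < j.val then some (Y j ω) else none := by
    intro i ω j
    show (if i < j then some (Y j ω) else none) = _
    by_cases h : i < j
    · rw [if_pos h, if_pos (Fin.lt_def.mp h)]
    · rw [if_neg h, if_neg (fun hc => h (Fin.lt_def.mpr hc))]
  have hpast : ∀ (i : Fin n) (ω : Ω) (j : Fin n),
      past Z i ω j = if j.val < i.val then some (Z j ω) else none := by
    intro i ω j
    show (if j < i then some (Z j ω) else none) = _
    by_cases h : j < i
    · rw [if_pos h, if_pos (Fin.lt_def.mp h)]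
    · rw [if_neg h, if_neg (fun hc => h (Fin.lt_def.mpr hc))]
  have hGY : ∀ i : Fin n, G i.val =
      ent p (fun ω => (Y i ω, (fut Y i ω, past Z i ω, M ω))) := by
    intro i
    rw [hGdef i.val]
    refine ent_congr p (fun ω => (Y i ω, (fut Y i ω, past Z i ω, M ω))) _
      (fun u => (fun j => if j = i then some u.1 else u.2.1 j, u.2.2.1, u.2.2.2))
      (fun v => ((v.1 i).getD (Y i ω₀),
        fun j => if i < j then v.1 j else none, v.2.1, v.2.2))
      (fun ω => ?_) (fun ω => ?_)
    · refine Prod.ext (funext fun j => ?_) (Prod.ext (funext fun j => ?_) rfl)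
      · show (if i.val ≤ j.val then some (Y j ω) else none)
            = if j = i then some (Y i ω) else fut Y i ω j
        by_cases hji : j = i
        · subst hji; rw [if_pos rfl, if_pos (le_refl j.val)]
        · rw [if_neg hji, hfut i ω j]
          have hne : j.val ≠ i.val := fun hc => hji (Fin.ext hc)
          by_cases h : i.val < j.val
          · rw [if_pos h, if_pos (le_of_lt h)]
          · rw [if_neg h, if_neg (by omega)]
      · show (if j.val < i.val then some (Z j ω) else none) = past Z i ω j
        rw [hpast i ω j]
    · show (Y i ω, fut Y i ω, past Z i ω, M ω)
        = ((if i.val ≤ i.val then some (Y i ω) else none).getD (Y i ω₀),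
           fun j => if i < j then (if i.val ≤ j.val then some (Y j ω) else none) else none,
           fun j => if j.val < i.val then some (Z j ω) else none, M ω)
      refine Prod.ext ?_ (Prod.ext (funext fun j => ?_) (Prod.ext (funext fun j => ?_) rfl))
      · rw [if_pos (le_refl i.val)]; rfl
      · show fut Y i ω j
            = if i < j then (if i.val ≤ j.val then some (Y j ω) else none) else none
        rw [hfut i ω j]
        by_cases h : i < j
        · rw [if_pos h, if_pos (Fin.lt_def.mp h), if_pos (le_of_lt (Fin.lt_def.mp h))]
        · rw [if_neg h, if_neg (fun hc => h (Fin.lt_def.mpr hc))]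
      · show past Z i ω j = if j.val < i.val then some (Z j ω) else none
        exact hpast i ω j
  have hGZ : ∀ i : Fin n, G (i.val + 1) =
      ent p (fun ω => (Z i ω, (fut Y i ω, past Z i ω, M ω))) := by
    intro i
    rw [hGdef (i.val + 1)]
    refine ent_congr p (fun ω => (Z i ω, (fut Y i ω, past Z i ω, M ω))) _
      (fun u => (u.2.1, fun j => if j = i then some u.1 else u.2.2.1 j, u.2.2.2))
      (fun v => ((v.2.1 i).getD (Z i ω₀),
        fun j => if i < j then v.1 j else none,
        fun j => if j < i then v.2.1 j else none, v.2.2))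
      (fun ω => ?_) (fun ω => ?_)
    · refine Prod.ext (funext fun j => ?_) (Prod.ext (funext fun j => ?_) rfl)
      · show (if i.val + 1 ≤ j.val then some (Y j ω) else none) = fut Y i ω j
        rw [hfut i ω j]
        by_cases h : i.val < j.val
        · rw [if_pos (by omega : i.val + 1 ≤ j.val), if_pos h]
        · rw [if_neg (by omega : ¬ i.val + 1 ≤ j.val), if_neg h]
      · show (if j.val < i.val + 1 then some (Z j ω) else none)
            = if j = i then some (Z i ω) else past Z i ω j
        by_cases hji : j = i
        · subst hji; rw [if_pos rfl, if_pos (by omega : j.val < j.val + 1)]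
        · rw [if_neg hji, hpast i ω j]
          have hne : j.val ≠ i.val := fun hc => hji (Fin.ext hc)
          by_cases h : j.val < i.val
          · rw [if_pos h, if_pos (by omega : j.val < i.val + 1)]
          · rw [if_neg h, if_neg (by omega : ¬ j.val < i.val + 1)]
    · show (Z i ω, fut Y i ω, past Z i ω, M ω)
        = ((if i.val < i.val + 1 then some (Z i ω) else none).getD (Z i ω₀),
           fun j => if i < j then (if i.val + 1 ≤ j.val then some (Y j ω) else none) else none,
           fun j => if j < i then (if j.val < i.val + 1 then some (Z j ω) else none) else none,
           M ω)
      refine Prod.ext ?_ (Prod.ext (funext fun j => ?_) (Prod.ext (funext fun j => ?_) rfl))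
      · rw [if_pos (by omega : i.val < i.val + 1)]; rfl
      · show fut Y i ω j
            = if i < j then (if i.val + 1 ≤ j.val then some (Y j ω) else none) else none
        rw [hfut i ω j]
        by_cases h : i < j
        · have hn := Fin.lt_def.mp h
          rw [if_pos h, if_pos (by omega : i.val + 1 ≤ j.val), if_pos hn]
        · rw [if_neg h, if_neg (fun hc => h (Fin.lt_def.mpr hc))]
      · show past Z i ω j
            = if j < i then (if j.val < i.val + 1 then some (Z j ω) else none) else none
        rw [hpast i ω j]
        by_cases h : j < i
        · have hn := Fin.lt_def.mp h
          rw [if_pos h, if_pos (by omega : j.val < i.val + 1), if_pos hn]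
        · rw [if_neg h, if_neg (fun hc => h (Fin.lt_def.mpr hc))]
  have hEZ : ent p (fun ω => fun i => Z i ω) = ∑ i, ent p (Z i) :=
    iid_proj_ent p hp1 (fun i ω => (X i ω, Y i ω, Z i ω)) hiid (fun t => t.2.2)
  have hEY : ent p (fun ω => fun i => Y i ω) = ∑ i, ent p (Y i) :=
    iid_proj_ent p hp1 (fun i ω => (X i ω, Y i ω, Z i ω)) hiid (fun t => t.2.1)
  have htel : ∑ i : Fin n, (G i.val - G (i.val + 1)) = G 0 - G n := by
    rw [Fin.sum_univ_eq_sum_range (fun k => G k - G (k + 1)) n]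
    exact Finset.sum_range_sub' G n
  have hterm : ∀ i : Fin n,
      mutInf p (Z i) (fun ω => (fut Y i ω, past Z i ω, M ω)) -
        mutInf p (Y i) (fun ω => (fut Y i ω, past Z i ω, M ω)) =
      (ent p (Z i) - ent p (Y i)) + (G i.val - G (i.val + 1)) := by
    intro i
    simp only [mutInf]
    rw [← hGZ i, ← hGY i]
    ring
  rw [Finset.sum_congr rfl (fun i _ => hterm i), Finset.sum_add_distrib, htel,
    Finset.sum_sub_distrib]
  simp only [mutInf]
  rw [hEZ, hEY, ← hG0, ← hGn]
  ring
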